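/- Let α > 0 and σ ≥ 0 be real with α > 2σ², and set ω* := √(α(α−2σ²)). Then there exist ε > 0 and a differentiable function λ : (−ε, ε) → ℂ such that λ(0) = iω*, such that λ(μ) + α − (μ + √(2α))·√(λ(μ) + σ²) = 0 for all |μ| < ε, and such that Re λ′(0) > 0. -/

import Mathlib

noncomputable def csqrt (z : ℂ) : ℂ := z ^ (1/2 : ℂ)

lemma csqrt_sq {w : ℂ} (hw : 0 < w.re) : csqrt (w ^ 2) = w := by
  have harg : |Complex.arg w| < Real.pi / 2 :=
    Complex.abs_arg_lt_pi_div_two_iff.mpr (Or.inl hw)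
  obtain ⟨h1, h2⟩ := abs_lt.mp harg
  have him : (Complex.log w * 2).im = Complex.arg w * 2 := by
    simp [Complex.mul_im, Complex.log_im]
  have hmul := Complex.cpow_mul (x := w) (y := 2) (1/2 : ℂ)
      (by rw [him]; nlinarith [Real.pi_pos]) (by rw [him]; nlinarith [Real.pi_pos])
  have h1' : w ^ ((2 : ℂ) * (1/2 : ℂ)) = w := by norm_num
  rw [h1'] at hmul
  have h2c : w ^ (2 : ℂ) = w ^ 2 := by
    rw [show (2:ℂ) = ((2:ℕ):ℂ) by norm_num, Complex.cpow_natCast]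
  rw [h2c] at hmul
  exact hmul.symm

lemma aux_re (u v t : ℝ) :
    (2 * (((u:ℝ):ℂ) + ((v:ℝ):ℂ) * Complex.I) * ((1 + Complex.I * ((t:ℝ):ℂ)) / 2)).re
      = u - v * t := by
  have h : 2 * (((u:ℝ):ℂ) + ((v:ℝ):ℂ) * Complex.I) * ((1 + Complex.I * ((t:ℝ):ℂ)) / 2)
      = (((u - v*t : ℝ)):ℂ) + (((u*t + v : ℝ)):ℂ) * Complex.I := by
    push_cast
    linear_combination ((v:ℂ)*(t:ℂ)) * Complex.I_sq
  rw [h]; simp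

theorem stmt_8 (α σ : ℝ) (hα : 0 < α) (hσ : 0 ≤ σ) (h2 : 2*σ^2 < α) :
    ∃ ε : ℝ, 0 < ε ∧ ∃ lam : ℝ → ℂ,
      lam 0 = Complex.I * Real.sqrt (α*(α - 2*σ^2)) ∧
      (∀ μ : ℝ, |μ| < ε → DifferentiableAt ℝ lam μ) ∧
      (∀ μ : ℝ, |μ| < ε →
        lam μ + α - (μ + Real.sqrt (2*α)) * csqrt (lam μ + (σ:ℂ)^2) = 0) ∧
      0 < (deriv lam 0).re := by
  set c := Real.sqrt (2*α) with hc
  have hc2 : c^2 = 2*α := Real.sq_sqrt (by linarith)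
  have hcpos : 0 < c := Real.sqrt_pos.mpr (by linarith)
  set B := 4*(α - σ^2) with hB
  have hσ2 : 0 ≤ σ^2 := sq_nonneg σ
  have hcB : c^2 < B := by rw [hc2, hB]; nlinarith
  have hBpos : 0 < B := by rw [hB]; nlinarith
  have hcltsB : c < Real.sqrt B := by
    rw [← Real.sqrt_sq hcpos.le]; exact Real.sqrt_lt_sqrt (sq_nonneg c) hcB
  set ε := min (c/2) ((Real.sqrt B - c)/2) with hε
  have hεpos : 0 < ε := lt_min (by linarith) (by linarith)
  refine ⟨ε, hεpos, ?_⟩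
  set D : ℝ → ℝ := fun μ => B - (μ + c)^2 with hD
  set w : ℝ → ℂ := fun μ => (((μ + c : ℝ) : ℂ) + Complex.I * (Real.sqrt (D μ) : ℝ)) / 2
    with hw
  set lam : ℝ → ℂ := fun μ => (w μ)^2 - (σ:ℂ)^2 with hlam
  have hpos : ∀ μ : ℝ, |μ| < ε → 0 < μ + c ∧ 0 < D μ := by
    intro μ hμ
    obtain ⟨hμ1, hμ2⟩ := abs_lt.mp hμ
    have hε1 : ε ≤ c/2 := min_le_left _ _
    have hε2 : ε ≤ (Real.sqrt B - c)/2 := min_le_right _ _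
    have hp : 0 < μ + c := by linarith
    have hub : μ + c < Real.sqrt B := by linarith
    refine ⟨hp, ?_⟩
    have h3 : (μ + c)^2 < Real.sqrt B ^ 2 := by nlinarith
    rw [Real.sq_sqrt hBpos.le] at h3
    simp only [hD]; linarith
  have hwderiv : ∀ μ : ℝ, D μ ≠ 0 →
      HasDerivAt w ((1 + Complex.I * (((-(2*(μ+c))) / (2*Real.sqrt (D μ)) : ℝ) : ℂ))/2) μ := by
    intro μ hne
    have hD' : HasDerivAt D (-(2*(μ+c))) μ := by
      have h1 : HasDerivAt (fun x : ℝ => (x + c)^2) (2*(μ+c)) μ := by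
        simpa using ((hasDerivAt_id μ).add_const c).fun_pow 2
      simpa [hD] using h1.const_sub B
    have hs : HasDerivAt (fun x => Real.sqrt (D x)) ((-(2*(μ+c))) / (2*Real.sqrt (D μ))) μ :=
      hD'.sqrt hne
    have hs' : HasDerivAt (fun x : ℝ => ((Real.sqrt (D x) : ℝ) : ℂ))
        (((-(2*(μ+c))) / (2*Real.sqrt (D μ)) : ℝ) : ℂ) μ := hs.ofReal_comp
    have hs'' := hs'.const_mul Complex.I
    have hl : HasDerivAt (fun x : ℝ => ((x + c : ℝ) : ℂ)) 1 μ := by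
      simpa using ((hasDerivAt_id μ).add_const c).ofReal_comp
    simpa [hw] using (hl.add hs'').div_const 2
  have hlamderiv : ∀ μ : ℝ, D μ ≠ 0 →
      HasDerivAt lam (2 * w μ *
        ((1 + Complex.I * (((-(2*(μ+c))) / (2*Real.sqrt (D μ)) : ℝ) : ℂ))/2)) μ := by
    intro μ hne
    have h := hwderiv μ hne
    have hm := (h.fun_mul h).sub_const ((σ:ℂ)^2)
    have heq : lam = fun x => w x * w x - (σ:ℂ)^2 := by
      funext x; simp [hlam, pow_two]
    rw [heq]
    convert hm using 1
    · rfl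
    ring
  have hD0 : D 0 = 2*α - 4*σ^2 := by
    simp only [hD, zero_add]; rw [hB]; linarith [hc2]
  have hD0pos : 0 < D 0 := (hpos 0 (by simpa using hεpos)).2
  have hs2 : Real.sqrt (D 0)^2 = 2*α - 4*σ^2 := by rw [Real.sq_sqrt hD0pos.le, hD0]
  have hspos : 0 < Real.sqrt (D 0) := Real.sqrt_pos.mpr hD0pos
  have hc2' : ((c:ℝ):ℂ)^2 = 2*(α:ℂ) := by exact_mod_cast hc2
  have hs2' : ((Real.sqrt (D 0) : ℝ):ℂ)^2 = 2*(α:ℂ) - 4*(σ:ℂ)^2 := by exact_mod_cast hs2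
  refine ⟨lam, ?_, ?_, ?_, ?_⟩
  · -- lam 0 = I * sqrt (α (α - 2σ²))
    have hsq : (c * Real.sqrt (D 0) / 2)^2 = α*(α - 2*σ^2) := by
      rw [div_pow, mul_pow, hc2, hs2]; ring
    have hval : Real.sqrt (α*(α - 2*σ^2)) = c * Real.sqrt (D 0) / 2 := by
      rw [← hsq, Real.sqrt_sq
        (div_nonneg (mul_nonneg hcpos.le (Real.sqrt_nonneg _)) (by norm_num))]
    rw [hval]
    simp only [hlam, hw]
    push_cast
    linear_combination (((Real.sqrt (D 0) : ℝ):ℂ)^2/4) * Complex.I_sq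
      + (1/4)*hc2' - (1/4)*hs2'
  · intro μ hμ
    exact (hlamderiv μ (hpos μ hμ).2.ne').differentiableAt
  · intro μ hμ
    obtain ⟨hp, hDp⟩ := hpos μ hμ
    have hwrw : w μ = ((((μ+c)/2 : ℝ)):ℂ) + (((Real.sqrt (D μ))/2 : ℝ):ℂ)*Complex.I := by
      simp only [hw]; push_cast; ring
    have hre : (w μ).re = (μ + c)/2 := by rw [hwrw]; simp
    have hcs : csqrt (lam μ + (σ:ℂ)^2) = w μ := by
      have h0 : lam μ + (σ:ℂ)^2 = (w μ)^2 := by simp only [hlam]; ring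
      rw [h0, csqrt_sq (by rw [hre]; positivity)]
    rw [hcs]
    have hq0 : Real.sqrt (D μ)^2 = 4*(α - σ^2) - (μ+c)^2 := by
      rw [Real.sq_sqrt hDp.le]
    have hq : ((Real.sqrt (D μ) : ℝ):ℂ)^2 = 4*((α:ℂ) - (σ:ℂ)^2) - ((μ:ℂ)+(c:ℂ))^2 := by
      exact_mod_cast hq0
    simp only [hlam, hw]
    push_cast
    linear_combination (((Real.sqrt (D μ) : ℝ):ℂ)^2/4) * Complex.I_sq - (1/4) * hq
  · have hd := (hlamderiv 0 hD0pos.ne').deriv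
    rw [hd]
    have hsne : Real.sqrt (D 0) ≠ 0 := hspos.ne'
    have ht : (-(2*(0+c))) / (2*Real.sqrt (D 0)) = -c/Real.sqrt (D 0) := by
      field_simp; ring
    have hw0 : w 0 = (((c/2 : ℝ)):ℂ) + (((Real.sqrt (D 0))/2 : ℝ):ℂ)*Complex.I := by
      simp only [hw]; push_cast; ring
    rw [ht, hw0, aux_re]
    have h4 : (Real.sqrt (D 0)/2)*(-c/Real.sqrt (D 0)) = -(c/2) := by
      field_simp
    rw [h4]
    linarith
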